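/- Let a and b be coprime positive integers. Define T(n) = ∑ kℓ, the sum over all pairs (k,ℓ) of positive integers with ak + bℓ = n. Then T(n) is asymptotically equivalent to n³/(6a²b²) as n → ∞, i.e. T(n)·6a²b²/n³ → 1. -/

import Mathlib

open Filter

def twpaR (a b n : ℕ) : ℕ :=
  if ((n : ZMod b) * (a : ZMod b)⁻¹).val = 0 then b else ((n : ZMod b) * (a : ZMod b)⁻¹).val

def twpaL (a b n : ℕ) : ℕ := (n - a * twpaR a b n) / b

def twpaM (a b n : ℕ) : ℕ := (twpaL a b n - 1) / a

section
variable (a b n : ℕ)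

lemma twpaR_pos (hb : 0 < b) : 0 < twpaR a b n := by
  unfold twpaR; split <;> omega

lemma twpaR_le (hb : 0 < b) : twpaR a b n ≤ b := by
  haveI : NeZero b := ⟨hb.ne'⟩
  unfold twpaR; split
  · exact le_refl b
  · exact (ZMod.val_lt _).le

lemma twpaR_modeq (hb : 0 < b) (hab : Nat.Coprime a b) :
    a * twpaR a b n ≡ n [MOD b] := by
  haveI : NeZero b := ⟨hb.ne'⟩
  have h1 : ((twpaR a b n : ℕ) : ZMod b) = (n : ZMod b) * (a : ZMod b)⁻¹ := by
    unfold twpaR; split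
    next h =>
      rw [ZMod.natCast_self]
      have h2 : (((((n : ZMod b) * (a : ZMod b)⁻¹).val : ℕ)) : ZMod b)
          = (n : ZMod b) * (a : ZMod b)⁻¹ := by
        simp [ZMod.natCast_val, ZMod.cast_id]
      rw [h] at h2
      simpa using h2
    next h => simp [ZMod.natCast_val, ZMod.cast_id]
  apply (ZMod.natCast_eq_natCast_iff _ _ _).mp
  push_cast
  rw [h1, ← mul_assoc, mul_comm (a : ZMod b) (n : ZMod b), mul_assoc,
      ZMod.coe_mul_inv_eq_one a hab, mul_one]

/-- key3: `a * k ≡ n (mod b)` iff `k ≡ R (mod b)`. -/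
lemma twpaR_iff (hb : 0 < b) (hab : Nat.Coprime a b) (k : ℕ) :
    a * k ≡ n [MOD b] ↔ k ≡ twpaR a b n [MOD b] := by
  haveI : NeZero b := ⟨hb.ne'⟩
  have hu : IsUnit (a : ZMod b) := by
    refine IsUnit.of_mul_eq_one _ (ZMod.coe_mul_inv_eq_one a hab)
  have hR := twpaR_modeq a b n hb hab
  constructor
  · intro h
    have h' : ((a * k : ℕ) : ZMod b) = ((a * twpaR a b n : ℕ) : ZMod b) := by
      rw [(ZMod.natCast_eq_natCast_iff _ _ _).mpr (h.trans hR.symm)]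
    push_cast at h'
    have := hu.mul_left_cancel h'
    exact (ZMod.natCast_eq_natCast_iff _ _ _).mp this
  · intro h
    exact (Nat.ModEq.mul_left a h).trans hR

end

section
variable (a b n : ℕ)

lemma twpa_basic (ha : 0 < a) (hb : 0 < b) (hab : Nat.Coprime a b)
    (hn : a * b + b ≤ n) :
    a * twpaR a b n + b * twpaL a b n = n ∧ 1 ≤ twpaL a b n ∧
      a * twpaM a b n + 1 ≤ twpaL a b n ∧ twpaL a b n ≤ a * twpaM a b n + a := by
  have hR1 := twpaR_pos a b n hb
  have hRb := twpaR_le a b n hb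
  have haR : a * twpaR a b n + b ≤ n := by
    have : a * twpaR a b n ≤ a * b := Nat.mul_le_mul_left a hRb
    omega
  have hmod := twpaR_modeq a b n hb hab
  have hdvd : b ∣ n - a * twpaR a b n := (Nat.modEq_iff_dvd' (by omega)).mp hmod
  have hbL : b * twpaL a b n = n - a * twpaR a b n := Nat.mul_div_cancel' hdvd
  have hsum : a * twpaR a b n + b * twpaL a b n = n := by omega
  have hL1 : 1 ≤ twpaL a b n := by
    rcases Nat.eq_zero_or_pos (twpaL a b n) with h | h
    · rw [h] at hbL; omega
    · exact h
  have hM1 : a * twpaM a b n + 1 ≤ twpaL a b n := by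
    have := Nat.mul_div_le (twpaL a b n - 1) a
    rw [twpaM]; omega
  have hM2 : twpaL a b n ≤ a * twpaM a b n + a := by
    have h1 := Nat.div_add_mod (twpaL a b n - 1) a
    have h2 := Nat.mod_lt (twpaL a b n - 1) ha
    rw [twpaM]; omega
  exact ⟨hsum, hL1, hM1, hM2⟩

lemma twpa_set_eq (ha : 0 < a) (hb : 0 < b) (hab : Nat.Coprime a b)
    (hn : a * b + b ≤ n) :
    (Finset.Ioc 0 n ×ˢ Finset.Ioc 0 n).filter (fun p : ℕ × ℕ => a * p.1 + b * p.2 = n)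
      = (Finset.range (twpaM a b n + 1)).image
          (fun j => (twpaR a b n + b * j, twpaL a b n - a * j)) := by
  obtain ⟨hsum, hL1, hM1, hM2⟩ := twpa_basic a b n ha hb hab hn
  set R := twpaR a b n with hRdef
  set L := twpaL a b n with hLdef
  set M := twpaM a b n with hMdef
  have hR1 : 0 < R := twpaR_pos a b n hb
  have hRb : R ≤ b := twpaR_le a b n hb
  ext ⟨k, l⟩
  simp only [Finset.mem_filter, Finset.mem_product, Finset.mem_Ioc, Finset.mem_image,
    Finset.mem_range, Prod.mk.injEq]
  constructor
  · rintro ⟨⟨⟨hk0, hkn⟩, ⟨hl0, hln⟩⟩, heq⟩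
    have hkR : k ≡ R [MOD b] := by
      apply (twpaR_iff a b n hb hab k).mp
      have h0 : b * l ≡ 0 [MOD b] := Nat.modEq_zero_iff_dvd.mpr ⟨l, rfl⟩
      calc a * k = a * k + 0 := by omega
        _ ≡ a * k + b * l [MOD b] := Nat.ModEq.add_left _ h0.symm
        _ = n := heq
    obtain ⟨j, hj⟩ : ∃ j, k = R + b * j := by
      rcases le_total R k with h | h
      · obtain ⟨c, hc'⟩ := (Nat.modEq_iff_dvd' h).mp hkR.symm
        exact ⟨c, by omega⟩
      · obtain ⟨c, hc'⟩ := (Nat.modEq_iff_dvd' h).mp hkR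
        rcases c with _ | c
        · exact ⟨0, by omega⟩
        · exfalso
          have hx : b * (c + 1) = b * c + b := by ring
          omega
    -- from the equation derive a*j + l = L
    have e1 : a * k = a * R + b * (a * j) := by rw [hj]; ring
    have e2 : b * (a * j) + b * l = b * L := by omega
    have e3 : b * (a * j + l) = b * (a * j) + b * l := by ring
    have hjl : a * j + l = L := Nat.eq_of_mul_eq_mul_left hb (by omega)
    have hjM : j ≤ M := by
      have haj : j * a ≤ L - 1 := by
        have : a * j = j * a := by ring
        omega
      rw [hMdef, twpaM, ← hLdef]
      exact (Nat.le_div_iff_mul_le ha).mpr haj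
    exact ⟨j, by omega, hj.symm, by omega⟩
  · rintro ⟨j, hjM, hk, hl⟩
    have haj : a * j + 1 ≤ L := by
      have h1 : a * j ≤ a * M := Nat.mul_le_mul_left a (by omega)
      omega
    have e1 : a * (R + b * j) = a * R + b * (a * j) := by ring
    have e2 : b * (L - a * j) + b * (a * j) = b * L := by
      rw [← Nat.mul_add, Nat.sub_add_cancel (by omega)]
    have heq : a * (R + b * j) + b * (L - a * j) = n := by omega
    have hbl1 : 1 ≤ b * (L - a * j) := by
      have : 1 ≤ L - a * j := by omega
      exact le_trans hb (Nat.le_mul_of_pos_right b (by omega))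
    have hk1 : a * (R + b * j) ≥ R + b * j := Nat.le_mul_of_pos_left _ ha
    have hl1 : b * (L - a * j) ≥ L - a * j := Nat.le_mul_of_pos_left _ hb
    subst hk hl
    exact ⟨⟨⟨by omega, by omega⟩, ⟨by omega, by omega⟩⟩, heq⟩

end

lemma sum_range_cast (m : ℕ) : ∑ j ∈ Finset.range m, (j : ℝ) = m * (m - 1) / 2 := by
  induction m with
  | zero => simp
  | succ k ih => rw [Finset.sum_range_succ, ih]; push_cast; ring

lemma sum_range_sq_cast (m : ℕ) :
    ∑ j ∈ Finset.range m, (j : ℝ) ^ 2 = m * (m - 1) * (2 * m - 1) / 6 := by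
  induction m with
  | zero => simp
  | succ k ih => rw [Finset.sum_range_succ, ih]; push_cast; ring

section
variable (a b n : ℕ)

lemma twpa_sum_eq (ha : 0 < a) (hb : 0 < b) (hab : Nat.Coprime a b)
    (hn : a * b + b ≤ n) :
    ((∑ p ∈ (Finset.Ioc 0 n ×ˢ Finset.Ioc 0 n).filter
        (fun p : ℕ × ℕ => a * p.1 + b * p.2 = n), p.1 * p.2 : ℕ) : ℝ)
      = (twpaM a b n + 1) * (twpaR a b n * twpaL a b n)
        + (b * twpaL a b n - a * twpaR a b n)
            * ((twpaM a b n + 1) * twpaM a b n / 2)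
        - a * b * ((twpaM a b n + 1) * twpaM a b n * (2 * twpaM a b n + 1) / 6) := by
  obtain ⟨hsum, hL1, hM1, hM2⟩ := twpa_basic a b n ha hb hab hn
  rw [twpa_set_eq a b n ha hb hab hn]
  set R := twpaR a b n with hRdef
  set L := twpaL a b n with hLdef
  set M := twpaM a b n with hMdef
  rw [Finset.sum_image (by
    intro x hx y hy hxy
    simp only [Prod.mk.injEq] at hxy
    have hbx : b * x = b * y := by omega
    exact Nat.eq_of_mul_eq_mul_left hb hbx)]
  rw [Nat.cast_sum]
  have hcast : ∀ j ∈ Finset.range (M + 1),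
      (((R + b * j) * (L - a * j) : ℕ) : ℝ)
        = ((R : ℝ) + b * j) * ((L : ℝ) - a * j) := by
    intro j hj
    simp only [Finset.mem_range] at hj
    have haj : a * j ≤ L := by
      have : a * j ≤ a * M := Nat.mul_le_mul_left a (by omega)
      omega
    push_cast [Nat.cast_sub haj]
    ring
  rw [Finset.sum_congr rfl hcast]
  have expand : ∀ j ∈ Finset.range (M + 1),
      ((R : ℝ) + b * j) * ((L : ℝ) - a * j)
        = (R : ℝ) * L + ((b : ℝ) * L - a * R) * (j : ℝ)
            - (a : ℝ) * b * (j : ℝ) ^ 2 := by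
    intro j _; ring
  rw [Finset.sum_congr rfl expand]
  simp only [Finset.sum_sub_distrib, Finset.sum_add_distrib, Finset.sum_const,
    Finset.card_range, ← Finset.mul_sum, sum_range_cast, sum_range_sq_cast]
  push_cast
  ring

end

section
variable (a b : ℕ)

lemma twpa_tendsto_R (ha : 0 < a) (hb : 0 < b) :
    Filter.Tendsto (fun n : ℕ => (twpaR a b n : ℝ) / n) atTop (nhds 0) := by
  apply tendsto_of_tendsto_of_tendsto_of_le_of_le' tendsto_const_nhds
    (tendsto_const_div_atTop_nhds_zero_nat (b:ℝ))
  · filter_upwards [Filter.eventually_ge_atTop 1] with n hn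
    positivity
  · filter_upwards [Filter.eventually_ge_atTop 1] with n hn
    have hn0 : (0:ℝ) ≤ n := by positivity
    gcongr
    exact_mod_cast twpaR_le a b n hb

lemma twpa_tendsto_L (ha : 0 < a) (hb : 0 < b) (hab : Nat.Coprime a b) :
    Filter.Tendsto (fun n : ℕ => (twpaL a b n : ℝ) / n) atTop (nhds (1 / (b:ℝ))) := by
  have h : Filter.Tendsto (fun n : ℕ => ((1:ℝ) - (a:ℝ) * ((twpaR a b n : ℝ)/n)) / (b:ℝ))
      atTop (nhds (((1:ℝ) - (a:ℝ) * 0) / (b:ℝ))) := by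
    exact (tendsto_const_nhds.sub ((twpa_tendsto_R a b ha hb).const_mul (a:ℝ))).div_const (b:ℝ)
  rw [mul_zero, sub_zero] at h
  apply h.congr'
  filter_upwards [Filter.eventually_ge_atTop (a * b + b)] with n hn
  obtain ⟨hsum, _, _, _⟩ := twpa_basic a b n ha hb hab hn
  have hn0 : (0:ℝ) < n := by
    have h1 : 0 < n := by nlinarith [hn]
    exact_mod_cast h1
  have hb0 : (b:ℝ) ≠ 0 := by positivity
  have hc : (a:ℝ) * twpaR a b n + b * twpaL a b n = n := by exact_mod_cast hsum
  field_simp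
  nlinarith [hc]

end

section
variable (a b : ℕ)

lemma twpa_tendsto_M (ha : 0 < a) (hb : 0 < b) (hab : Nat.Coprime a b) :
    Filter.Tendsto (fun n : ℕ => (twpaM a b n : ℝ) / n) atTop
      (nhds (1 / (b:ℝ) / (a:ℝ))) := by
  have ha0 : (0:ℝ) < a := by exact_mod_cast ha
  have hlow : Filter.Tendsto
      (fun n : ℕ => ((twpaL a b n : ℝ) / n) / a - 1 / n) atTop
      (nhds (1 / (b:ℝ) / (a:ℝ))) := by
    have h := ((twpa_tendsto_L a b ha hb hab).div_const (a:ℝ)).sub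
      (tendsto_const_div_atTop_nhds_zero_nat 1)
    rw [sub_zero] at h
    exact h
  have hup : Filter.Tendsto
      (fun n : ℕ => ((twpaL a b n : ℝ) / n) / a) atTop
      (nhds (1 / (b:ℝ) / (a:ℝ))) := (twpa_tendsto_L a b ha hb hab).div_const (a:ℝ)
  apply tendsto_of_tendsto_of_tendsto_of_le_of_le' hlow hup
  · filter_upwards [Filter.eventually_ge_atTop (a * b + b)] with n hn
    obtain ⟨hsum, hL1, hM1, hM2⟩ := twpa_basic a b n ha hb hab hn
    have hn0 : (0:ℝ) < n := by
      have h1 : 0 < n := by nlinarith [hn]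
      exact_mod_cast h1
    have hc : (twpaL a b n : ℝ) ≤ a * twpaM a b n + a := by exact_mod_cast hM2
    rw [show ((twpaL a b n : ℝ) / n) / a - 1 / n = ((twpaL a b n : ℝ) / a - 1) / n by ring]
    gcongr
    rw [sub_le_iff_le_add, div_le_iff₀ ha0]
    nlinarith
  · filter_upwards [Filter.eventually_ge_atTop (a * b + b)] with n hn
    obtain ⟨hsum, hL1, hM1, hM2⟩ := twpa_basic a b n ha hb hab hn
    have hn0 : (0:ℝ) < n := by
      have h1 : 0 < n := by nlinarith [hn]
      exact_mod_cast h1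
    have hc : (a:ℝ) * twpaM a b n + 1 ≤ twpaL a b n := by exact_mod_cast hM1
    rw [show ((twpaL a b n : ℝ) / n) / a = ((twpaL a b n : ℝ) / a) / n by ring]
    gcongr
    rw [le_div_iff₀ ha0]
    nlinarith

end

/-- For coprime positive integers `a, b`, the sum
`T(n) = ∑_{k,ℓ ≥ 1, ak + bℓ = n} kℓ` satisfies `T(n) ~ n³/(6a²b²)` as `n → ∞`. -/
theorem two_var_weighted_partition_asymptotics (a b : ℕ) (ha : 0 < a) (hb : 0 < b)
    (hab : Nat.Coprime a b) :
    Tendsto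
      (fun n : ℕ =>
        ((∑ p ∈ (Finset.Ioc 0 n ×ˢ Finset.Ioc 0 n).filter
            (fun p : ℕ × ℕ => a * p.1 + b * p.2 = n), p.1 * p.2 : ℕ) : ℝ)
          * (6 * (a : ℝ) ^ 2 * (b : ℝ) ^ 2) / (n : ℝ) ^ 3)
      atTop (nhds 1) := by
  have ha0 : ((a:ℝ)) ≠ 0 := by positivity
  have hb0 : ((b:ℝ)) ≠ 0 := by positivity
  have hw := twpa_tendsto_R a b ha hb
  have hv := twpa_tendsto_L a b ha hb hab
  have hu := twpa_tendsto_M a b ha hb hab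
  have he := tendsto_const_div_atTop_nhds_zero_nat (1:ℝ)
  set w : ℕ → ℝ := fun n => (twpaR a b n : ℝ) / n with hwdef
  set v : ℕ → ℝ := fun n => (twpaL a b n : ℝ) / n with hvdef
  set u : ℕ → ℝ := fun n => (twpaM a b n : ℝ) / n with hudef
  set e : ℕ → ℝ := fun n => 1 / (n:ℝ) with hedef
  have hF : Filter.Tendsto
      (fun n : ℕ => 6*(a:ℝ)^2*(b:ℝ)^2 *
        ( w n * v n * (u n + e n)
          + ((b:ℝ) * v n - (a:ℝ) * w n) * ((u n + e n) * u n) / 2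
          - (a:ℝ) * (b:ℝ) * ((u n + e n) * u n * (2 * u n + e n)) / 6 ))
      atTop
      (nhds (6*(a:ℝ)^2*(b:ℝ)^2 *
        ( 0 * (1/(b:ℝ)) * (1/(b:ℝ)/(a:ℝ) + 0)
          + ((b:ℝ) * (1/(b:ℝ)) - (a:ℝ) * 0) * ((1/(b:ℝ)/(a:ℝ) + 0) * (1/(b:ℝ)/(a:ℝ))) / 2
          - (a:ℝ) * (b:ℝ) * ((1/(b:ℝ)/(a:ℝ) + 0) * (1/(b:ℝ)/(a:ℝ)) * (2 * (1/(b:ℝ)/(a:ℝ)) + 0)) / 6 ))) := by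
    apply Filter.Tendsto.const_mul
    exact (((hw.mul hv).mul (hu.add he)).add
        ((((hv.const_mul (b:ℝ)).sub (hw.const_mul (a:ℝ))).mul ((hu.add he).mul hu)).div_const 2)).sub
      (((((hu.add he).mul hu).mul ((hu.const_mul 2).add he)).const_mul ((a:ℝ)*(b:ℝ))).div_const 6)
  have hval : (6*(a:ℝ)^2*(b:ℝ)^2 *
        ( 0 * (1/(b:ℝ)) * (1/(b:ℝ)/(a:ℝ) + 0)
          + ((b:ℝ) * (1/(b:ℝ)) - (a:ℝ) * 0) * ((1/(b:ℝ)/(a:ℝ) + 0) * (1/(b:ℝ)/(a:ℝ))) / 2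
          - (a:ℝ) * (b:ℝ) * ((1/(b:ℝ)/(a:ℝ) + 0) * (1/(b:ℝ)/(a:ℝ)) * (2 * (1/(b:ℝ)/(a:ℝ)) + 0)) / 6 )) = 1 := by
    field_simp
    ring
  rw [hval] at hF
  apply hF.congr'
  filter_upwards [Filter.eventually_ge_atTop (a * b + b)] with n hn
  have hn1 : 1 ≤ n := le_trans (by nlinarith) hn
  have hn0 : ((n:ℝ)) ≠ 0 := by
    have : (0:ℝ) < n := by exact_mod_cast hn1
    positivity
  rw [twpa_sum_eq a b n ha hb hab hn]
  simp only [hwdef, hvdef, hudef, hedef]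
  field_simp
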